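/- Let n ≥ 1, let P : Matrix (Fin n) (Fin n) ℂ be invertible, let D : Matrix (Fin n) (Fin n) ℂ be diagonal with pairwise distinct diagonal entries, and set A = P * D * P⁻¹. Let r : Fin n be such that P r j ≠ 0 for every j : Fin n (every entry of row r of P is nonzero). Then the ℂ-linear map from the centralizer {M : Matrix (Fin n) (Fin n) ℂ | M * A = A * M} to (Fin n → ℂ) sending M to its row r (the function j ↦ M r j) is bijective. -/
import Mathlib


open Matrix

/-- The centralizer of `A` in `gl_n`, as a `ℂ`-linear subspace of the space of
matrices. -/
noncomputable def matrixCentralizer (n : ℕ) (A : Matrix (Fin n) (Fin n) ℂ) :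
    Submodule ℂ (Matrix (Fin n) (Fin n) ℂ) where
  carrier := {X | X * A = A * X}
  add_mem' := by
    intro a b ha hb
    simp only [Set.mem_setOf_eq] at *
    rw [add_mul, mul_add, ha, hb]
  zero_mem' := by simp
  smul_mem' := by
    intro c x hx
    simp only [Set.mem_setOf_eq] at *
    rw [smul_mul_assoc, mul_smul_comm, hx]

/-- Let `A = P * D * P⁻¹` with `P` invertible and `D` diagonal
with pairwise distinct diagonal entries, and suppose every entry of row `r` of
`P` is nonzero. Then projecting the centralizer of `A` onto its `r`-th row is a
bijection onto `ℂⁿ`. -/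
theorem centralizer_row_projection_bijective (n : ℕ) (hn : 1 ≤ n)
    (P D : Matrix (Fin n) (Fin n) ℂ) (hP : IsUnit P.det)
    (hDdiag : ∀ i j, i ≠ j → D i j = 0)
    (hDdist : ∀ i j, i ≠ j → D i i ≠ D j j)
    (r : Fin n) (hr : ∀ j, P r j ≠ 0) :
    Function.Bijective
      (fun M : matrixCentralizer n (P * D * P⁻¹) =>
        fun j => (M : Matrix (Fin n) (Fin n) ℂ) r j) := by
  have hPinv : P * P⁻¹ = 1 := mul_nonsing_inv P hP
  have hinvP : P⁻¹ * P = 1 := nonsing_inv_mul P hP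
  have c1 : ∀ X : Matrix (Fin n) (Fin n) ℂ, P⁻¹ * (P * X) = X := fun X => by
    rw [← Matrix.mul_assoc, hinvP, Matrix.one_mul]
  have c2 : ∀ X : Matrix (Fin n) (Fin n) ℂ, P * (P⁻¹ * X) = X := fun X => by
    rw [← Matrix.mul_assoc, hPinv, Matrix.one_mul]
  -- D is the diagonal matrix of its diagonal entries
  have hD : D = diagonal (fun i => D i i) := by
    ext i j
    by_cases h : i = j
    · subst h; simp [diagonal]
    · simp [diagonal, h, hDdiag i j h]
  -- row formula
  have hrow : ∀ (e : Fin n → ℂ) (j : Fin n),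
      (P * diagonal e * P⁻¹) r j = ((fun k => P r k * e k) ᵥ* P⁻¹) j := by
    intro e j
    rw [Matrix.mul_apply]
    simp only [Matrix.mul_diagonal]
    rfl
  -- vecMul by P⁻¹ is injective
  have hvec : ∀ v w : Fin n → ℂ, v ᵥ* P⁻¹ = w ᵥ* P⁻¹ → v = w := by
    intro v w h
    have := congrArg (fun u => u ᵥ* P) h
    simpa [Matrix.vecMul_vecMul, hinvP] using this
  -- every centralizer element has the form P * diagonal e * P⁻¹
  have hform : ∀ M : Matrix (Fin n) (Fin n) ℂ, M * (P * D * P⁻¹) = P * D * P⁻¹ * M →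
      M = P * diagonal (fun k => (P⁻¹ * M * P) k k) * P⁻¹ := by
    intro M hM
    set E := P⁻¹ * M * P with hE
    have hcomm : E * D = D * E := by
      have h := congrArg (fun X => P⁻¹ * X * P) hM
      simp only [Matrix.mul_assoc, c1] at h
      rw [hinvP, Matrix.mul_one] at h
      calc E * D = P⁻¹ * (M * (P * D)) := by simp [hE, Matrix.mul_assoc]
        _ = D * (P⁻¹ * (M * P)) := h
        _ = D * E := by simp [hE, Matrix.mul_assoc]
    have hEdiag : E = diagonal (fun k => E k k) := by
      ext i j
      by_cases h : i = j
      · subst h; simp [diagonal]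
      · have h1 : (E * D) i j = (D * E) i j := by rw [hcomm]
        rw [Matrix.mul_apply, Matrix.mul_apply] at h1
        rw [Finset.sum_eq_single j (fun k _ hk => by rw [hDdiag k j hk, mul_zero])
          (fun hj => absurd (Finset.mem_univ j) hj)] at h1
        rw [Finset.sum_eq_single i (fun k _ hk => by rw [hDdiag i k (Ne.symm hk), zero_mul])
          (fun hi => absurd (Finset.mem_univ i) hi)] at h1
        have h2 : E i j * (D j j - D i i) = 0 := by linear_combination h1
        rcases mul_eq_zero.mp h2 with h3 | h3
        · simp [diagonal, h, h3]
        · exact absurd (sub_eq_zero.mp h3) (hDdist j i fun hji => h hji.symm)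
    calc M = P * (P⁻¹ * M * P) * P⁻¹ := by
          rw [Matrix.mul_assoc P⁻¹ M P, c2, Matrix.mul_assoc, hPinv, Matrix.mul_one]
      _ = P * diagonal (fun k => E k k) * P⁻¹ := by rw [← hE, ← hEdiag]
  constructor
  · -- injective
    rintro ⟨M₁, h₁⟩ ⟨M₂, h₂⟩ h
    simp only [Set.mem_setOf_eq] at h
    have hM₁ := hform M₁ h₁
    have hM₂ := hform M₂ h₂
    set e₁ := fun k => (P⁻¹ * M₁ * P) k k
    set e₂ := fun k => (P⁻¹ * M₂ * P) k k
    have hre : (fun k => P r k * e₁ k) ᵥ* P⁻¹ = (fun k => P r k * e₂ k) ᵥ* P⁻¹ := by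
      funext j
      rw [← hrow, ← hrow, ← hM₁, ← hM₂]
      exact congrFun h j
    have he : e₁ = e₂ := by
      have := hvec _ _ hre
      funext k
      exact mul_left_cancel₀ (hr k) (congrFun this k)
    apply Subtype.ext
    show M₁ = M₂
    rw [hM₁, hM₂, he]
  · -- surjective
    intro v
    set e : Fin n → ℂ := fun k => (v ᵥ* P) k / P r k with he
    have hPe : (fun k => P r k * e k) = v ᵥ* P := by
      funext k
      show P r k * ((v ᵥ* P) k / P r k) = (v ᵥ* P) k
      rw [mul_comm, div_mul_cancel₀ _ (hr k)]
    refine ⟨⟨P * diagonal e * P⁻¹, ?_⟩, ?_⟩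
    · show P * diagonal e * P⁻¹ * (P * D * P⁻¹) = P * D * P⁻¹ * (P * diagonal e * P⁻¹)
      have : diagonal e * D = D * diagonal e := by
        rw [hD, diagonal_mul_diagonal, diagonal_mul_diagonal]
        exact congrArg diagonal (funext fun k => mul_comm _ _)
      calc P * diagonal e * P⁻¹ * (P * D * P⁻¹)
          = P * (diagonal e * D) * P⁻¹ := by
            simp [Matrix.mul_assoc, c1, c2]
        _ = P * (D * diagonal e) * P⁻¹ := by rw [this]
        _ = P * D * P⁻¹ * (P * diagonal e * P⁻¹) := by
            simp [Matrix.mul_assoc, c1, c2]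
    · funext j
      show (P * diagonal e * P⁻¹) r j = v j
      rw [hrow, hPe]
      have : (v ᵥ* P) ᵥ* P⁻¹ = v := by
        rw [Matrix.vecMul_vecMul, hPinv, Matrix.vecMul_one]
      rw [this]
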